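/- Let k be algebraically closed of characteristic 3 with ξ a primitive fifth root of unity. Let G₁ ≤ PGL(2,k) be generated by [[1,1],[0,1]] and [[1,0],[0,-1]], and G₂ ≤ PGL(2,k) be generated by [[ξ,0],[0,1]] and [[0,1],[1,0]]. Then G₁ ∩ G₂ = {1}. -/

import Mathlib

open scoped LinearAlgebra.Projectivization
open Matrix Projectivization

noncomputable section

/-- The projective general linear group `PGL(2,k)`: `GL(2,k)` modulo its center. -/
abbrev PGL2 (k : Type) [Field k] : Type := GL (Fin 2) k ⧸ Subgroup.center (GL (Fin 2) k)

variable {k : Type} [Field k]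

open scoped Classical in
/-- The class in `PGL(2,k)` of a nonsingular 2×2 matrix (junk value `1` if singular). -/
def pgl (M : Matrix (Fin 2) (Fin 2) k) : PGL2 k :=
  if h : M.det ≠ 0 then QuotientGroup.mk (Matrix.GeneralLinearGroup.mkOfDetNeZero M h)
  else 1

/-- The projective line `P¹(k)`. -/
abbrev P1 (k : Type) [Field k] := ℙ k (Fin 2 → k)

/-- The linear automorphism of `k²` given by a matrix in `GL(2,k)`. -/
def glLinEquiv (g : GL (Fin 2) k) : (Fin 2 → k) ≃ₗ[k] (Fin 2 → k) :=
  LinearMap.GeneralLinearGroup.generalLinearEquiv k (Fin 2 → k)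
    (Matrix.GeneralLinearGroup.toLin g)

lemma glLinEquiv_apply (g : GL (Fin 2) k) (v : Fin 2 → k) :
    glLinEquiv g v = Matrix.mulVecLin g.val v := rfl

/-- `GL(2,k)` acts on `P¹(k)` by fractional linear transformations. -/
instance glAction : MulAction (GL (Fin 2) k) (P1 k) where
  smul g x := x.map (glLinEquiv g).toLinearMap (glLinEquiv g).injective
  one_smul x := by
    show Projectivization.map _ _ x = x
    have h1 : glLinEquiv (1 : GL (Fin 2) k) = LinearEquiv.refl k _ := by
      simp only [glLinEquiv, _root_.map_one]; rfl
    induction' x using Projectivization.ind with v hv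
    rw [Projectivization.map_mk]
    simp [h1]
  mul_smul g h x := by
    show Projectivization.map _ _ x =
      Projectivization.map _ _ (Projectivization.map _ _ x)
    have hgh : glLinEquiv (g * h) = (glLinEquiv h).trans (glLinEquiv g) := by
      simp only [glLinEquiv, _root_.map_mul]; rfl
    induction' x using Projectivization.ind with v hv
    simp only [Projectivization.map_mk, hgh]
    rfl

lemma gl_smul_mk (g : GL (Fin 2) k) (v : Fin 2 → k) (hv : v ≠ 0) :
    g • Projectivization.mk k v hv =
      Projectivization.mk k (glLinEquiv g v) ((glLinEquiv g).map_ne_zero_iff.mpr hv) :=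
  rfl

/-- Central (i.e. scalar) matrices act trivially on `P¹(k)`. -/
lemma central_smul_triv (c : GL (Fin 2) k) (hc : c ∈ Subgroup.center (GL (Fin 2) k))
    (x : P1 k) : c • x = x := by
  obtain ⟨r, hr⟩ : c.val ∈ Set.range (Matrix.scalar (Fin 2)) := by
    refine Matrix.mem_range_scalar_of_commute_transvectionStruct (fun t => ?_)
    have htGL : (Matrix.GeneralLinearGroup.mkOfDetNeZero t.toMatrix
        (by rw [t.det]; exact one_ne_zero) : GL (Fin 2) k) * c =
        c * Matrix.GeneralLinearGroup.mkOfDetNeZero t.toMatrix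
        (by rw [t.det]; exact one_ne_zero) :=
      (Subgroup.mem_center_iff.mp hc) _
    exact congrArg Units.val htGL
  have hr0 : r ≠ 0 := by
    rintro rfl
    have hu : IsUnit c.val.det := (Matrix.isUnit_iff_isUnit_det _).mp c.isUnit
    rw [← hr] at hu
    simp at hu
  induction' x using Projectivization.ind with v hv
  rw [gl_smul_mk]
  apply (Projectivization.mk_eq_mk_iff' k _ _ _ hv).mpr
  refine ⟨r, ?_⟩
  rw [glLinEquiv_apply, ← hr]
  funext j
  simp [Matrix.mulVec_diagonal]

/-- The action of `GL(2,k)` on `P¹(k)` descends to `PGL(2,k)`. -/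
instance pglAction : MulAction (PGL2 k) (P1 k) where
  smul g x := Quotient.liftOn' g (fun A => A • x) (by
    intro a b hab
    rw [QuotientGroup.leftRel_apply] at hab
    have : b = a * (a⁻¹ * b) := by group
    show a • x = b • x
    rw [this, mul_smul, central_smul_triv _ hab])
  one_smul x := by
    show (1 : GL (Fin 2) k) • x = x
    exact MulAction.one_smul x
  mul_smul a b x := by
    refine Quotient.inductionOn₂' a b (fun A B => ?_)
    show (A * B) • x = A • (B • x)
    exact mul_smul A B x

/-- The point `(a : 1)` of `P¹(k)`. -/
def pt (a : k) : P1 k := Projectivization.mk k ![a, 1] (by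
  intro h; simpa using congrFun h 1)

/-- The point at infinity `(1 : 0)` of `P¹(k)`. -/
def inftyPt : P1 k := Projectivization.mk k ![1, 0] (by
  intro h; simpa using congrFun h 0)

lemma pgl_mul' {M N : Matrix (Fin 2) (Fin 2) k} (hM : M.det ≠ 0) (hN : N.det ≠ 0) :
    pgl (M * N) = pgl M * pgl N := by
  have hMN : (M * N).det ≠ 0 := by
    rw [Matrix.det_mul]; exact mul_ne_zero hM hN
  rw [pgl, pgl, pgl, dif_pos hM, dif_pos hN, dif_pos hMN, ← QuotientGroup.mk_mul]
  congr 1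
  exact Units.ext rfl

lemma pgl_one' : pgl (1 : Matrix (Fin 2) (Fin 2) k) = 1 := by
  have h : (1 : Matrix (Fin 2) (Fin 2) k).det ≠ 0 := by simp
  rw [pgl, dif_pos h]
  have : Matrix.GeneralLinearGroup.mkOfDetNeZero (1 : Matrix (Fin 2) (Fin 2) k) h = 1 :=
    Units.ext rfl
  rw [this, QuotientGroup.mk_one]

lemma pgl_scalar' {c : k} (hc : c ≠ 0) :
    pgl (c • (1 : Matrix (Fin 2) (Fin 2) k)) = 1 := by
  have hdet : (c • (1 : Matrix (Fin 2) (Fin 2) k)).det ≠ 0 := by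
    rw [Matrix.det_smul]
    simp [hc]
  rw [pgl, dif_pos hdet, QuotientGroup.eq_one_iff, Subgroup.mem_center_iff]
  intro g
  refine Units.ext ?_
  show g.val * (c • 1) = (c • 1) * g.val
  simp [mul_smul_comm, smul_mul_assoc]

lemma pgl_smul' {c : k} (hc : c ≠ 0) {M : Matrix (Fin 2) (Fin 2) k} (hM : M.det ≠ 0) :
    pgl (c • M) = pgl M := by
  have h1 : c • M = M * (c • (1 : Matrix (Fin 2) (Fin 2) k)) := by
    rw [mul_smul_comm, mul_one]
  rw [h1, pgl_mul' hM (by rw [Matrix.det_smul]; simp [hc]), pgl_scalar' hc, mul_one]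

lemma pgl_eq_imp' {M N : Matrix (Fin 2) (Fin 2) k} (hM : M.det ≠ 0) (hN : N.det ≠ 0)
    (h : pgl M = pgl N) : ∃ c : k, c ≠ 0 ∧ N = c • M := by
  rw [pgl, pgl, dif_pos hM, dif_pos hN, QuotientGroup.eq] at h
  set gM := Matrix.GeneralLinearGroup.mkOfDetNeZero M hM with hgM
  set gN := Matrix.GeneralLinearGroup.mkOfDetNeZero N hN with hgN
  obtain ⟨r, hr⟩ : (gM⁻¹ * gN).val ∈ Set.range (Matrix.scalar (Fin 2)) := by
    refine Matrix.mem_range_scalar_of_commute_transvectionStruct fun t => ?_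
    have := (Subgroup.mem_center_iff.mp h) (Matrix.GeneralLinearGroup.mkOfDetNeZero t.toMatrix
      (by rw [t.det]; exact one_ne_zero))
    exact congrArg Units.val this
  have hscal : (Matrix.scalar (Fin 2)) r = r • (1 : Matrix (Fin 2) (Fin 2) k) := by
    ext i j
    by_cases hij : i = j <;>
      simp [Matrix.scalar_apply, Matrix.smul_apply, Matrix.one_apply, Matrix.diagonal_apply, hij]
  have hr0 : r ≠ 0 := by
    rintro rfl
    have hu : IsUnit (gM⁻¹ * gN).val.det :=
      (Matrix.isUnit_iff_isUnit_det _).mp (gM⁻¹ * gN).isUnit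
    rw [← hr, hscal] at hu
    simp at hu
  refine ⟨r, hr0, ?_⟩
  have hdec : gN = gM * (gM⁻¹ * gN) := by group
  have hval := congrArg Units.val hdec
  rw [Units.val_mul, ← hr, hscal] at hval
  have hNM : N = M * (r • (1 : Matrix (Fin 2) (Fin 2) k)) := hval
  rw [hNM, mul_smul_comm, mul_one]

lemma smul2 (c a b d e : k) : c • !![a, b; d, e] = !![c*a, c*b; c*d, c*e] := by
  ext i j
  fin_cases i <;> fin_cases j <;> simp [Matrix.smul_apply]

lemma claimA (h3 : (1:k) + 1 + 1 = 0) {g : PGL2 k}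
    (hg : g ∈ Subgroup.closure {pgl !![(1:k), 1; 0, 1], pgl !![(1:k), 0; 0, -1]}) :
    ∃ ε b : k, (ε = 1 ∨ ε = -1) ∧ (b = 0 ∨ b = 1 ∨ b = -1) ∧ g = pgl !![ε, b; 0, 1] := by
  have hdet : ∀ ε b : k, (ε = 1 ∨ ε = -1) → (!![ε, b; 0, 1]).det ≠ 0 := by
    intro ε b hε
    rw [Matrix.det_fin_two_of]
    rcases hε with rfl | rfl <;> simp
  have haddB : ∀ x y : k, (x = 0 ∨ x = 1 ∨ x = -1) → (y = 0 ∨ y = 1 ∨ y = -1) →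
      (x + y = 0 ∨ x + y = 1 ∨ x + y = -1) := by
    intro x y hx hy
    rcases hx with rfl|rfl|rfl <;> rcases hy with rfl|rfl|rfl <;>
      first
        | (left; linear_combination)
        | (right; left; linear_combination)
        | (right; right; linear_combination)
        | (left; linear_combination h3)
        | (right; left; linear_combination h3)
        | (right; right; linear_combination h3)
        | (left; linear_combination -h3)
        | (right; left; linear_combination -h3)
        | (right; right; linear_combination -h3)
  have hnegB : ∀ x : k, (x = 0 ∨ x = 1 ∨ x = -1) → (-x = 0 ∨ -x = 1 ∨ -x = -1) := by
    intro x hx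
    rcases hx with rfl|rfl|rfl <;> simp
  induction hg using Subgroup.closure_induction with
  | mem x hx =>
    simp only [Set.mem_insert_iff, Set.mem_singleton_iff] at hx
    rcases hx with rfl | rfl
    · exact ⟨1, 1, Or.inl rfl, Or.inr (Or.inl rfl), rfl⟩
    · refine ⟨-1, 0, Or.inr rfl, Or.inl rfl, ?_⟩
      have hmm : ((-1 : k)) • !![(-1:k), 0; 0, 1] = !![(1:k), 0; 0, -1] := by
        rw [smul2]; ext a b; fin_cases a <;> fin_cases b <;> norm_num
      rw [← hmm, pgl_smul' (by norm_num) (hdet _ _ (Or.inr rfl))]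
  | one =>
    refine ⟨1, 0, Or.inl rfl, Or.inl rfl, ?_⟩
    rw [← Matrix.one_fin_two, pgl_one']
  | mul x y hx hy ihx ihy =>
    obtain ⟨ε, b, hε, hb, rfl⟩ := ihx
    obtain ⟨ε', b', hε', hb', rfl⟩ := ihy
    refine ⟨ε * ε', ε * b' + b, ?_, ?_, ?_⟩
    · rcases hε with rfl|rfl <;> rcases hε' with rfl|rfl <;> norm_num
    · apply haddB
      · rcases hε with rfl|rfl
        · simpa using hb'
        · simpa using hnegB _ hb'
      · exact hb
    · rw [← pgl_mul' (hdet _ _ hε) (hdet _ _ hε')]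
      congr 1
      rw [Matrix.mul_fin_two]
      ext a c; fin_cases a <;> fin_cases c <;> simp <;> ring
  | inv x hx ihx =>
    obtain ⟨ε, b, hε, hb, rfl⟩ := ihx
    refine ⟨ε, -(ε*b), hε, ?_, ?_⟩
    · apply hnegB
      rcases hε with rfl|rfl
      · simpa using hb
      · simpa using hnegB _ hb
    · apply inv_eq_of_mul_eq_one_right
      rw [← pgl_mul' (hdet _ _ hε) (hdet _ _ hε)]
      have hmat : !![ε, b; 0, 1] * !![ε, -(ε*b); 0, 1] = 1 := by
        rw [Matrix.mul_fin_two, Matrix.one_fin_two]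
        ext a c; fin_cases a <;> fin_cases c <;>
          rcases hε with rfl|rfl <;> simp <;> ring
      rw [hmat, pgl_one']

lemma claimB {ξ : k} (hξ5 : ξ ^ 5 = 1) (hξ0 : ξ ≠ 0) {g : PGL2 k}
    (hg : g ∈ Subgroup.closure {pgl !![ξ, 0; 0, 1], pgl !![(0:k), 1; 1, 0]}) :
    ∃ i : ℕ, i < 5 ∧ (g = pgl !![ξ^i, 0; 0, 1] ∨ g = pgl !![0, ξ^i; 1, 0]) := by
  have hpow : ∀ n : ℕ, ξ ^ n = ξ ^ (n % 5) := by
    intro n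
    conv_lhs => rw [← Nat.div_add_mod n 5]
    rw [pow_add, pow_mul, hξ5, one_pow, one_mul]
  have hd : ∀ i : ℕ, (!![ξ^i, 0; 0, 1] : Matrix (Fin 2) (Fin 2) k).det ≠ 0 := by
    intro i; rw [Matrix.det_fin_two_of]; simp [pow_ne_zero, hξ0]
  have ha : ∀ i : ℕ, (!![(0:k), ξ^i; 1, 0] : Matrix (Fin 2) (Fin 2) k).det ≠ 0 := by
    intro i; rw [Matrix.det_fin_two_of]; simp [pow_ne_zero, hξ0]
  induction hg using Subgroup.closure_induction with
  | mem x hx =>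
    simp only [Set.mem_insert_iff, Set.mem_singleton_iff] at hx
    rcases hx with rfl | rfl
    · exact ⟨1, by norm_num, Or.inl (by rw [pow_one])⟩
    · exact ⟨0, by norm_num, Or.inr (by rw [pow_zero])⟩
  | one => exact ⟨0, by norm_num, Or.inl (by rw [pow_zero, ← Matrix.one_fin_two, pgl_one'])⟩
  | mul x y hx hy ihx ihy =>
    obtain ⟨i, hi, hxe⟩ := ihx
    obtain ⟨j, hj, hye⟩ := ihy
    have key : ∀ i j : ℕ, j < 5 → ξ^j * ξ^((i + (5-j)) % 5) = ξ^i := by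
      intro i j hj
      rw [← hpow, ← pow_add]
      have h5 : j + (i + (5-j)) = i + 5 := by omega
      rw [h5, pow_add, hξ5, mul_one]
    rcases hxe with rfl | rfl <;> rcases hye with rfl | rfl
    · refine ⟨(i+j) % 5, Nat.mod_lt _ (by norm_num), Or.inl ?_⟩
      rw [← pgl_mul' (hd i) (hd j)]
      congr 1
      rw [← hpow, pow_add, Matrix.mul_fin_two]
      ext a b; fin_cases a <;> fin_cases b <;> simp
    · refine ⟨(i+j) % 5, Nat.mod_lt _ (by norm_num), Or.inr ?_⟩
      rw [← pgl_mul' (hd i) (ha j)]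
      congr 1
      rw [← hpow, pow_add, Matrix.mul_fin_two]
      ext a b; fin_cases a <;> fin_cases b <;> simp
    · refine ⟨(i + (5-j)) % 5, Nat.mod_lt _ (by norm_num), Or.inr ?_⟩
      rw [← pgl_mul' (ha i) (hd j)]
      have hmat : !![(0:k),ξ^i;1,0] * !![ξ^j,0;0,1] = (ξ^j) • !![0, ξ^((i+(5-j))%5); 1, 0] := by
        rw [Matrix.mul_fin_two, smul2]
        ext a b; fin_cases a <;> fin_cases b <;> simp [key i j hj]
      rw [hmat, pgl_smul' (pow_ne_zero _ hξ0) (ha _)]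
    · refine ⟨(i + (5-j)) % 5, Nat.mod_lt _ (by norm_num), Or.inl ?_⟩
      rw [← pgl_mul' (ha i) (ha j)]
      have hmat : !![(0:k),ξ^i;1,0] * !![0,ξ^j;1,0] = (ξ^j) • !![ξ^((i+(5-j))%5), 0; 0, 1] := by
        rw [Matrix.mul_fin_two, smul2]
        ext a b; fin_cases a <;> fin_cases b <;> simp [key i j hj]
      rw [hmat, pgl_smul' (pow_ne_zero _ hξ0) (hd _)]
  | inv x hx ihx =>
    obtain ⟨i, hi, hxe⟩ := ihx
    rcases hxe with rfl | rfl
    · refine ⟨(5-i) % 5, Nat.mod_lt _ (by norm_num), Or.inl ?_⟩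
      apply inv_eq_of_mul_eq_one_right
      have key2 : ξ^i * ξ^((5-i)%5) = 1 := by
        rw [← hpow, ← pow_add]
        have h5 : i + (5-i) = 5 := by omega
        rw [h5, hξ5]
      rw [← pgl_mul' (hd i) (hd _)]
      have hmat : !![ξ^i,0;0,1] * !![ξ^((5-i)%5),0;0,1] = 1 := by
        rw [Matrix.mul_fin_two, Matrix.one_fin_two]
        ext a b; fin_cases a <;> fin_cases b <;> simp [key2]
      rw [hmat, pgl_one']
    · refine ⟨i, hi, Or.inr ?_⟩
      apply inv_eq_of_mul_eq_one_right
      rw [← pgl_mul' (ha i) (ha i)]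
      have hmat : !![(0:k),ξ^i;1,0] * !![0,ξ^i;1,0] = (ξ^i) • 1 := by
        rw [Matrix.mul_fin_two, Matrix.one_fin_two, smul2]
        ext a b; fin_cases a <;> fin_cases b <;> simp
      rw [hmat, pgl_scalar' (pow_ne_zero _ hξ0)]

/-- With `k` algebraically closed of characteristic 3 and `ξ` a primitive fifth
root of unity, the subgroups `G₁ = ⟨[[1,1],[0,1]], [[1,0],[0,-1]]⟩` and
`G₂ = ⟨[[ξ,0],[0,1]], [[0,1],[1,0]]⟩` of `PGL(2,k)` intersect trivially. -/
theorem stmt_5 (k : Type) [Field k] [IsAlgClosed k] [CharP k 3]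
    (ξ : k) (hξ : IsPrimitiveRoot ξ 5)
    (G₁ G₂ : Subgroup (PGL2 k))
    (hG₁ : G₁ = Subgroup.closure {pgl !![(1:k), 1; 0, 1], pgl !![(1:k), 0; 0, -1]})
    (hG₂ : G₂ = Subgroup.closure {pgl !![ξ, 0; 0, 1], pgl !![(0:k), 1; 1, 0]}) :
    G₁ ⊓ G₂ = ⊥ := by
  have h3 : (1:k) + 1 + 1 = 0 := by
    have h := CharP.cast_eq_zero k 3
    push_cast at h
    linear_combination h
  subst hG₁ hG₂
  rw [eq_bot_iff]
  rintro g ⟨hg1, hg2⟩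
  obtain ⟨ε, b, hε, hb, rfl⟩ := claimA h3 hg1
  obtain ⟨i, hi, hcase⟩ := claimB hξ.pow_eq_one (hξ.ne_zero (by norm_num)) hg2
  have hdN : (!![ε, b; 0, 1] : Matrix (Fin 2) (Fin 2) k).det ≠ 0 := by
    rw [Matrix.det_fin_two_of]
    rcases hε with rfl | rfl <;> simp
  have hξ0 : ξ ≠ 0 := hξ.ne_zero (by norm_num)
  rcases hcase with h | h
  · have hdD : (!![ξ^i, 0; 0, 1] : Matrix (Fin 2) (Fin 2) k).det ≠ 0 := by
      rw [Matrix.det_fin_two_of]; simp [pow_ne_zero, hξ0]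
    obtain ⟨c, hc, heq⟩ := pgl_eq_imp' hdN hdD h
    rw [smul2] at heq
    have e00 := congrFun (congrFun heq 0) 0
    have e01 := congrFun (congrFun heq 0) 1
    have e11 := congrFun (congrFun heq 1) 1
    simp at e00 e01 e11
    have hc1 : c = 1 := e11.symm
    subst hc1
    have hb0 : b = 0 := by
      rcases e01 with h' | h'
      · exact absurd h' one_ne_zero
      · exact h'
    subst hb0
    rcases hε with rfl | rfl
    · rw [Subgroup.mem_bot, ← Matrix.one_fin_two, pgl_one']
    · exfalso
      have h2i : ξ ^ (i*2) = 1 := by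
        rw [pow_mul, e00]
        norm_num
      have hdvd : 5 ∣ i * 2 := hξ.dvd_of_pow_eq_one _ h2i
      have h5i : 5 ∣ i := (Nat.Coprime.dvd_of_dvd_mul_right (by norm_num) hdvd)
      have hi0 : i = 0 := Nat.eq_zero_of_dvd_of_lt h5i hi
      subst hi0
      rw [pow_zero] at e00
      have h11 : (1:k) + 1 = 0 := by linear_combination e00
      have hone : (1:k) = 0 := by linear_combination h3 - h11
      exact one_ne_zero hone
  · exfalso
    have hdA : (!![(0:k), ξ^i; 1, 0] : Matrix (Fin 2) (Fin 2) k).det ≠ 0 := by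
      rw [Matrix.det_fin_two_of]; simp [pow_ne_zero, hξ0]
    obtain ⟨c, hc, heq⟩ := pgl_eq_imp' hdN hdA h
    rw [smul2] at heq
    have e10 := congrFun (congrFun heq 1) 0
    simp at e10
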